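/- Let X and Y be nonempty subsets of A⁺. Then XY and YX are both prefix codes and alt-induced codes if and only if X and Y are prefix codes; and XY and YX are both maximal prefix codes and alt-induced codes if and only if X and Y are maximal prefix codes. -/

import Mathlib

open List

/-- The (catenation) product `XY` of two languages. -/
def ProdL {A : Type*} (X Y : Set (List A)) : Set (List A) :=
  {z | ∃ x ∈ X, ∃ y ∈ Y, z = x ++ y}

/-- The product `XY` is unambiguous. -/
def Unamb {A : Type*} (X Y : Set (List A)) : Prop :=
  ∀ x₁ ∈ X, ∀ y₁ ∈ Y, ∀ x₂ ∈ X, ∀ y₂ ∈ Y,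
    x₁ ++ y₁ = x₂ ++ y₂ → x₁ = x₂ ∧ y₁ = y₂

/-- `X ⊆ A⁺` is a code: any equality of two (nonempty) factorizations over `X`
forces the factorizations to coincide. -/
def IsCode {A : Type*} (X : Set (List A)) : Prop :=
  ([] : List A) ∉ X ∧
  ∀ xs ys : List (List A), xs ≠ [] → ys ≠ [] →
    (∀ w ∈ xs, w ∈ X) → (∀ w ∈ ys, w ∈ X) → xs.flatten = ys.flatten → xs = ys

/-- `us` is an alternative factorization on `(X, Y)`: it has length at least 2,
its words lie in `X ∪ Y`, and consecutive words alternate between `X` and `Y`. -/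
def IsAltFact {A : Type*} (X Y : Set (List A)) (us : List (List A)) : Prop :=
  2 ≤ us.length ∧ (∀ w ∈ us, w ∈ X ∪ Y) ∧
  us.Chain' (fun u v => (u ∈ X → v ∈ Y) ∧ (u ∈ Y → v ∈ X))

/-- Two alternative factorizations are similar: they begin with words in the same
set (`X` or `Y`) and they end with words in the same set. -/
def SimilarFact {A : Type*} (X Y : Set (List A)) (us vs : List (List A)) : Prop :=
  (∀ u ∈ us.head?, ∀ v ∈ vs.head?, (u ∈ X ∧ v ∈ X) ∨ (u ∈ Y ∧ v ∈ Y)) ∧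
  (∀ u ∈ us.getLast?, ∀ v ∈ vs.getLast?, (u ∈ X ∧ v ∈ X) ∨ (u ∈ Y ∧ v ∈ Y))

/-- `(X, Y)` is an alternative code: `X, Y` are nonempty subsets of `A⁺` and no
word admits two different similar alternative factorizations on `(X, Y)`. -/
def IsAltCode {A : Type*} (X Y : Set (List A)) : Prop :=
  X.Nonempty ∧ Y.Nonempty ∧ ([] : List A) ∉ X ∧ ([] : List A) ∉ Y ∧
  ∀ us vs : List (List A), IsAltFact X Y us → IsAltFact X Y vs →
    SimilarFact X Y us vs → us.flatten = vs.flatten → us = vs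

/-- `Z` is an alt-induced code: `Z = XY` for some alternative code `(X, Y)`. -/
def IsAltInduced {A : Type*} (Z : Set (List A)) : Prop :=
  ∃ X Y : Set (List A), IsAltCode X Y ∧ Z = ProdL X Y

/-- `X ⊆ A⁺` is a prefix code: no word of `X` is a proper prefix of another word of `X`. -/
def IsPrefixCode {A : Type*} (X : Set (List A)) : Prop :=
  ([] : List A) ∉ X ∧ ∀ u ∈ X, ∀ v ∈ X, u <+: v → u = v

/-- `X ⊆ A⁺` is a suffix code: no word of `X` is a proper suffix of another word of `X`. -/
def IsSuffixCode {A : Type*} (X : Set (List A)) : Prop :=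
  ([] : List A) ∉ X ∧ ∀ u ∈ X, ∀ v ∈ X, u <:+ v → u = v

/-- A bifix code is both a prefix code and a suffix code. -/
def IsBifixCode {A : Type*} (X : Set (List A)) : Prop :=
  IsPrefixCode X ∧ IsSuffixCode X

/-- A maximal prefix code: a prefix code not properly contained in another prefix code. -/
def IsMaximalPrefixCode {A : Type*} (X : Set (List A)) : Prop :=
  IsPrefixCode X ∧ ∀ X' : Set (List A), IsPrefixCode X' → X ⊆ X' → X = X'

/-- A maximal suffix code: a suffix code not properly contained in another suffix code. -/
def IsMaximalSuffixCode {A : Type*} (X : Set (List A)) : Prop :=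
  IsSuffixCode X ∧ ∀ X' : Set (List A), IsSuffixCode X' → X ⊆ X' → X = X'

/-- A maximal bifix code: a bifix code not properly contained in another bifix code. -/
def IsMaximalBifixCode {A : Type*} (X : Set (List A)) : Prop :=
  IsBifixCode X ∧ ∀ X' : Set (List A), IsBifixCode X' → X ⊆ X' → X = X'

/-- `X` is thin: some word `w` is not a factor (infix) of any word of `X`. -/
def IsThin {A : Type*} (X : Set (List A)) : Prop :=
  ∃ w : List A, ∀ u v : List A, u ++ w ++ v ∉ X

/-- The left quotient `X⁻¹Y = {u | ∃ x ∈ X, xu ∈ Y}`. -/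
def lQuot {A : Type*} (X Y : Set (List A)) : Set (List A) :=
  {u | ∃ x ∈ X, x ++ u ∈ Y}

/-- The right quotient `XY⁻¹ = {u | ∃ y ∈ Y, uy ∈ X}`. -/
def rQuot {A : Type*} (X Y : Set (List A)) : Set (List A) :=
  {u | ∃ y ∈ Y, u ++ y ∈ X}

/-- `(X, Y)` is a strong alternative code: an alternative code with
`X⁻¹(XY) ⊆ Y` and `(XY)Y⁻¹ ⊆ X`. -/
def IsStrongAltCode {A : Type*} (X Y : Set (List A)) : Prop :=
  IsAltCode X Y ∧ lQuot X (ProdL X Y) ⊆ Y ∧ rQuot (ProdL X Y) Y ⊆ X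

/-- `Z` is a strong alt-induced code: `Z = XY` for some strong alternative code `(X, Y)`. -/
def IsStrongAltInduced {A : Type*} (Z : Set (List A)) : Prop :=
  ∃ X Y : Set (List A), IsStrongAltCode X Y ∧ Z = ProdL X Y

/-- `Z_a`: the set of words of `Z` beginning with the letter `a`. -/
def Za {A : Type*} (a : A) (Z : Set (List A)) : Set (List A) :=
  {w ∈ Z | w.head? = some a}

/-- A finite code `Z` is of standard form: all its words have length at least 2,
not all of its words begin with the same letter, and not all of its words end
with the same letter. -/
def StandardForm {A : Type*} (Z : Set (List A)) : Prop :=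
  (∀ w ∈ Z, 2 ≤ w.length) ∧
  ¬ (∃ a : A, ∀ w ∈ Z, w.head? = some a) ∧
  ¬ (∃ a : A, ∀ w ∈ Z, w.getLast? = some a)


section Aux

variable {A : Type*}

private lemma comparable_of_append_eq {u v s t : List A} (h : u ++ s = v ++ t) :
    u <+: v ∨ v <+: u :=
  List.prefix_or_prefix_of_prefix (⟨s, h⟩ : u <+: v ++ t) (List.prefix_append v t)

private lemma mem_prodl {X Y : Set (List A)} {x y : List A} (hx : x ∈ X) (hy : y ∈ Y) :
    x ++ y ∈ ProdL X Y := ⟨x, hx, y, hy, rfl⟩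

private lemma right_prefix_of_prod {X Y : Set (List A)} (hX : X.Nonempty)
    (hYe : ([] : List A) ∉ Y) (h : IsPrefixCode (ProdL X Y)) : IsPrefixCode Y := by
  obtain ⟨x, hx⟩ := hX
  refine ⟨hYe, fun u hu v hv huv => ?_⟩
  obtain ⟨t, ht⟩ := huv
  have h2 : (x ++ u) <+: (x ++ v) := ⟨t, by rw [List.append_assoc, ht]⟩
  have := h.2 (x ++ u) (mem_prodl hx hu) (x ++ v) (mem_prodl hx hv) h2
  exact List.append_cancel_left this

private lemma prod_prefix {X Y : Set (List A)} (hX : IsPrefixCode X) (hY : IsPrefixCode Y) :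
    IsPrefixCode (ProdL X Y) := by
  constructor
  · rintro ⟨x, hx, y, hy, hxy⟩
    have : x = [] := by
      cases x with
      | nil => rfl
      | cons a l => simp at hxy
    exact hX.1 (this ▸ hx)
  · rintro u ⟨x₁, hx₁, y₁, hy₁, rfl⟩ v ⟨x₂, hx₂, y₂, hy₂, rfl⟩ ⟨t, ht⟩
    have hx12 : x₁ = x₂ := by
      have hcomp : x₁ <+: x₂ ∨ x₂ <+: x₁ := by
        apply comparable_of_append_eq (s := y₁ ++ t) (t := y₂)
        rw [← List.append_assoc, ht]
      rcases hcomp with hc | hc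
      · exact hX.2 x₁ hx₁ x₂ hx₂ hc
      · exact (hX.2 x₂ hx₂ x₁ hx₁ hc).symm
    subst hx12
    have hy12 : y₁ = y₂ := by
      apply hY.2 y₁ hy₁ y₂ hy₂
      refine ⟨t, ?_⟩
      have := ht
      rw [List.append_assoc] at this
      exact List.append_cancel_left this
    rw [hy12]

private lemma key_alt {X Y : Set (List A)} (hX : IsPrefixCode X) (hY : IsPrefixCode Y) :
    ∀ us vs : List (List A),
      (∀ w ∈ us, w ∈ X ∪ Y) → (∀ w ∈ vs, w ∈ X ∪ Y) →
      us.Chain' (fun u v => (u ∈ X → v ∈ Y) ∧ (u ∈ Y → v ∈ X)) →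
      vs.Chain' (fun u v => (u ∈ X → v ∈ Y) ∧ (u ∈ Y → v ∈ X)) →
      (∀ u ∈ us.head?, ∀ v ∈ vs.head?, (u ∈ X ∧ v ∈ X) ∨ (u ∈ Y ∧ v ∈ Y)) →
      us.flatten = vs.flatten → us = vs := by
  have hne : ∀ w : List A, w ∈ X ∪ Y → w ≠ [] := by
    rintro w (hw | hw) rfl
    · exact hX.1 hw
    · exact hY.1 hw
  intro us
  induction us with
  | nil =>
    intro vs _ hvsm _ _ _ hf
    cases vs with
    | nil => rfl
    | cons v vs' =>
      exfalso
      simp only [List.flatten_nil, List.flatten_cons] at hf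
      have : v = [] := by
        cases v with
        | nil => rfl
        | cons a l => simp at hf
      exact hne v (hvsm v (List.mem_cons_self)) this
  | cons u us' ih =>
    intro vs husm hvsm hcu hcv hhead hf
    cases vs with
    | nil =>
      exfalso
      simp only [List.flatten_nil, List.flatten_cons] at hf
      have : u = [] := by
        cases u with
        | nil => rfl
        | cons a l => simp at hf
      exact hne u (husm u (List.mem_cons_self)) this
    | cons v vs' =>
      simp only [List.flatten_cons] at hf
      have hcomp : u <+: v ∨ v <+: u := comparable_of_append_eq hf
      have huv : u = v := by
        have := hhead u (by simp) v (by simp)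
        rcases this with ⟨h1, h2⟩ | ⟨h1, h2⟩
        · rcases hcomp with hc | hc
          · exact hX.2 u h1 v h2 hc
          · exact (hX.2 v h2 u h1 hc).symm
        · rcases hcomp with hc | hc
          · exact hY.2 u h1 v h2 hc
          · exact (hY.2 v h2 u h1 hc).symm
      subst huv
      have hf' : us'.flatten = vs'.flatten := List.append_cancel_left hf
      have hrec : us' = vs' := by
        apply ih vs'
        · intro w hw; exact husm w (List.mem_cons_of_mem _ hw)
        · intro w hw; exact hvsm w (List.mem_cons_of_mem _ hw)
        · exact hcu.tail
        · exact hcv.tail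
        · intro a ha b hb
          cases us' with
          | nil => simp at ha
          | cons u₂ t =>
            cases vs' with
            | nil => simp at hb
            | cons v₂ s =>
              simp only [List.head?_cons, Option.mem_def, Option.some.injEq] at ha hb
              subst ha; subst hb
              have r1 := List.isChain_cons_cons.mp hcu |>.1
              have r2 := List.isChain_cons_cons.mp hcv |>.1
              rcases husm u (List.mem_cons_self) with hu | hu
              · exact Or.inr ⟨r1.1 hu, r2.1 hu⟩
              · exact Or.inl ⟨r1.2 hu, r2.2 hu⟩
        · exact hf'
      rw [hrec]

private lemma altcode_of_prefix {X Y : Set (List A)} (hXn : X.Nonempty) (hYn : Y.Nonempty)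
    (hX : IsPrefixCode X) (hY : IsPrefixCode Y) : IsAltCode X Y := by
  refine ⟨hXn, hYn, hX.1, hY.1, fun us vs hus hvs hsim hf => ?_⟩
  exact key_alt hX hY us vs hus.2.1 hvs.2.1 hus.2.2 hvs.2.2 hsim.1 hf

/-- completeness of a prefix code -/
private def PComplete (X : Set (List A)) : Prop :=
  ∀ w : List A, w ≠ [] → ∃ x ∈ X, x <+: w ∨ w <+: x

private lemma complete_of_max {X : Set (List A)} (h : IsMaximalPrefixCode X) :
    PComplete X := by
  intro w hw
  by_contra hc
  push_neg at hc
  have hpc : IsPrefixCode (insert w X) := by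
    constructor
    · intro h0
      rcases h0 with h0 | h0
      · exact hw h0.symm
      · exact h.1.1 h0
    · rintro u (rfl | hu) v (rfl | hv) huv
      · rfl
      · exact absurd huv (hc v hv).2
      · exact absurd huv (hc u hu).1
      · exact h.1.2 u hu v hv huv
  have := h.2 (insert w X) hpc (Set.subset_insert _ _)
  have hwX : w ∈ X := this ▸ Set.mem_insert w X
  exact (hc w hwX).1 (List.prefix_refl w)

private lemma max_of_complete {X : Set (List A)} (h1 : IsPrefixCode X) (h2 : PComplete X) :
    IsMaximalPrefixCode X := by
  refine ⟨h1, fun X' hX' hsub => Set.Subset.antisymm hsub fun w hw => ?_⟩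
  have hwne : w ≠ [] := fun h => hX'.1 (h ▸ hw)
  obtain ⟨x, hx, hcomp⟩ := h2 w hwne
  rcases hcomp with hc | hc
  · have : x = w := hX'.2 x (hsub hx) w hw hc
    exact this ▸ hx
  · have : w = x := hX'.2 w hw x (hsub hx) hc
    exact this ▸ hx

private lemma prod_complete {X Y : Set (List A)} (hXc : PComplete X) (hYc : PComplete Y)
    (hYn : Y.Nonempty) (hYe : ([] : List A) ∉ Y) : PComplete (ProdL X Y) := by
  intro w hw
  obtain ⟨x, hx, hcomp⟩ := hXc w hw
  rcases hcomp with ⟨w', rfl⟩ | hc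
  · -- x <+: w, w = x ++ w'
    by_cases hw' : w' = []
    · obtain ⟨y, hy⟩ := hYn
      subst hw'
      exact ⟨x ++ y, mem_prodl hx hy, Or.inr ⟨y, by simp⟩⟩
    · obtain ⟨y, hy, hyc⟩ := hYc w' hw'
      rcases hyc with ⟨t, ht⟩ | ⟨t, ht⟩
      · exact ⟨x ++ y, mem_prodl hx hy, Or.inl ⟨t, by rw [List.append_assoc, ht]⟩⟩
      · exact ⟨x ++ y, mem_prodl hx hy, Or.inr ⟨t, by rw [List.append_assoc, ht]⟩⟩
  · obtain ⟨y, hy⟩ := hYn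
    obtain ⟨t, ht⟩ := hc
    exact ⟨x ++ y, mem_prodl hx hy, Or.inr ⟨t ++ y, by rw [← List.append_assoc, ht]⟩⟩

/-- From maximality of `YX` and `Y` being a prefix code, `X` is complete. -/
private lemma complete_left {X Y : Set (List A)} (hYpre : IsPrefixCode Y) (hY : Y.Nonempty)
    (hYX : PComplete (ProdL Y X)) : PComplete X := by
  intro w hw
  obtain ⟨y, hy⟩ := hY
  have hyw : y ++ w ≠ [] := by
    intro h
    exact hw (List.append_eq_nil_iff.mp h).2
  obtain ⟨z, ⟨y', hy', x', hx', rfl⟩, hcomp⟩ := hYX (y ++ w) hyw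
  rcases hcomp with ⟨t, ht⟩ | ⟨t, ht⟩
  · -- y' ++ x' ++ t = y ++ w
    have hyy' : y' = y := by
      have hcomp2 : y' <+: y ∨ y <+: y' :=
        comparable_of_append_eq (s := x' ++ t) (t := w) (by rw [← List.append_assoc, ht])
      rcases hcomp2 with hc | hc
      · exact hYpre.2 y' hy' y hy hc
      · exact (hYpre.2 y hy y' hy' hc).symm
    subst hyy'
    refine ⟨x', hx', Or.inl ⟨t, ?_⟩⟩
    have := ht
    rw [List.append_assoc] at this
    exact List.append_cancel_left this
  · -- y ++ w ++ t = y' ++ x'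
    have hyy' : y = y' := by
      have hcomp2 : y <+: y' ∨ y' <+: y :=
        comparable_of_append_eq (s := w ++ t) (t := x') (by rw [← List.append_assoc, ht])
      rcases hcomp2 with hc | hc
      · exact hYpre.2 y hy y' hy' hc
      · exact (hYpre.2 y' hy' y hy hc).symm
    subst hyy'
    refine ⟨x', hx', Or.inr ⟨t, ?_⟩⟩
    have := ht
    rw [List.append_assoc] at this
    exact List.append_cancel_left this

end Aux

/-- `XY` and `YX` are prefix (maximal prefix) alt-induced codes if and only if
`X` and `Y` are prefix (resp. maximal prefix) codes. -/
theorem stmt11 {A : Type*} [Fintype A] [Nonempty A]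
    (X Y : Set (List A)) (hX : X.Nonempty) (hY : Y.Nonempty)
    (hXe : ([] : List A) ∉ X) (hYe : ([] : List A) ∉ Y) :
    ((IsPrefixCode (ProdL X Y) ∧ IsAltInduced (ProdL X Y) ∧
      IsPrefixCode (ProdL Y X) ∧ IsAltInduced (ProdL Y X)) ↔
      (IsPrefixCode X ∧ IsPrefixCode Y)) ∧
    ((IsMaximalPrefixCode (ProdL X Y) ∧ IsAltInduced (ProdL X Y) ∧
      IsMaximalPrefixCode (ProdL Y X) ∧ IsAltInduced (ProdL Y X)) ↔
      (IsMaximalPrefixCode X ∧ IsMaximalPrefixCode Y)) := by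
  have mainPrefix : (IsPrefixCode (ProdL X Y) ∧ IsAltInduced (ProdL X Y) ∧
      IsPrefixCode (ProdL Y X) ∧ IsAltInduced (ProdL Y X)) ↔
      (IsPrefixCode X ∧ IsPrefixCode Y) := by
    constructor
    · rintro ⟨hXY, _, hYX, _⟩
      exact ⟨right_prefix_of_prod hY hXe hYX, right_prefix_of_prod hX hYe hXY⟩
    · rintro ⟨hXpre, hYpre⟩
      exact ⟨prod_prefix hXpre hYpre,
        ⟨X, Y, altcode_of_prefix hX hY hXpre hYpre, rfl⟩,
        prod_prefix hYpre hXpre,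
        ⟨Y, X, altcode_of_prefix hY hX hYpre hXpre, rfl⟩⟩
  refine ⟨mainPrefix, ?_⟩
  constructor
  · rintro ⟨hXY, hXYa, hYX, hYXa⟩
    obtain ⟨hXpre, hYpre⟩ := mainPrefix.mp ⟨hXY.1, hXYa, hYX.1, hYXa⟩
    constructor
    · exact max_of_complete hXpre (complete_left hYpre hY (complete_of_max hYX))
    · exact max_of_complete hYpre (complete_left hXpre hX (complete_of_max hXY))
  · rintro ⟨hXmax, hYmax⟩
    have hXpre := hXmax.1
    have hYpre := hYmax.1
    have hXc := complete_of_max hXmax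
    have hYc := complete_of_max hYmax
    refine ⟨max_of_complete (prod_prefix hXpre hYpre) (prod_complete hXc hYc hY hYe),
      ⟨X, Y, altcode_of_prefix hX hY hXpre hYpre, rfl⟩,
      max_of_complete (prod_prefix hYpre hXpre) (prod_complete hYc hXc hX hXe),
      ⟨Y, X, altcode_of_prefix hY hX hYpre hXpre, rfl⟩⟩
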